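/- For all integers m ≥ 0 and n ≥ 0, ∫_0^1 x^m · P_{m,n}(x)² dx = 1/(m+2n+1). -/

import Mathlib

open Polynomial MeasureTheory intervalIntegral

noncomputable def Ip (p : Polynomial ℝ) : ℝ := ∫ x in (0:ℝ)..1, p.eval x

lemma Ip_intble (p : Polynomial ℝ) :
    IntervalIntegrable (fun x => p.eval x) volume 0 1 :=
  p.continuous.intervalIntegrable 0 1

lemma Ip_add (p q : Polynomial ℝ) : Ip (p + q) = Ip p + Ip q := by
  simp only [Ip, eval_add]
  exact integral_add (Ip_intble p) (Ip_intble q)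

lemma Ip_C_mul (c : ℝ) (p : Polynomial ℝ) : Ip (C c * p) = c * Ip p := by
  simp only [Ip, eval_mul, eval_C]
  exact integral_const_mul c _

lemma Ip_deriv (p : Polynomial ℝ) : Ip (derivative p) = p.eval 1 - p.eval 0 :=
  integral_eq_sub_of_hasDerivAt (fun x _ => p.hasDerivAt x) (Ip_intble _)

lemma Ip_X_pow (a : ℕ) : Ip (X ^ a) = 1 / (a + 1 : ℝ) := by
  simp [Ip, integral_pow]

/-- Iterated integration by parts. -/
lemma Ip_parts (f : Polynomial ℝ) (n : ℕ)
    (h0 : ∀ k < n, (derivative^[k] f).eval 0 = 0)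
    (h1 : ∀ k < n, (derivative^[k] f).eval 1 = 0) :
    ∀ g : Polynomial ℝ,
      Ip (g * derivative^[n] f) = (-1) ^ n * Ip (derivative^[n] g * f) := by
  induction n with
  | zero => intro g; simp
  | succ n ih =>
    intro g
    have ih' := ih (fun k hk => h0 k (hk.trans (Nat.lt_succ_self n)))
      (fun k hk => h1 k (hk.trans (Nat.lt_succ_self n))) (derivative g)
    have key : derivative (g * derivative^[n] f)
        = derivative g * derivative^[n] f + g * derivative^[n + 1] f := by
      rw [derivative_mul, Function.iterate_succ_apply']
    have hb : Ip (derivative (g * derivative^[n] f)) = 0 := by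
      rw [Ip_deriv]
      simp [h0 n (Nat.lt_succ_self n), h1 n (Nat.lt_succ_self n)]
    rw [key, Ip_add] at hb
    have : Ip (g * derivative^[n + 1] f) = - Ip (derivative g * derivative^[n] f) := by
      linarith
    rw [this, ih', Function.iterate_succ_apply]
    ring

/-- derivatives of `(X - c)^(k+a+1) * q` keep a factor `(X - c)^(a+1)`. -/
lemma iter_deriv_factor (c : ℝ) :
    ∀ (k a : ℕ) (q : Polynomial ℝ), ∃ r : Polynomial ℝ,
      derivative^[k] ((X - C c) ^ (k + a + 1) * q) = (X - C c) ^ (a + 1) * r := by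
  intro k
  induction k with
  | zero => intro a q; exact ⟨q, by simp⟩
  | succ k ih =>
    intro a q
    have hd : derivative ((X - C c) ^ (k + 1 + a + 1) * q)
        = (X - C c) ^ (k + a + 1) *
            (C ((k + 1 + a + 1 : ℕ) : ℝ) * q + (X - C c) * derivative q) := by
      have he : k + 1 + a + 1 = (k + a + 1) + 1 := by omega
      rw [he, derivative_mul, derivative_pow, derivative_sub, derivative_X, derivative_C,
        Nat.add_sub_cancel]
      push_cast
      ring
    rw [Function.iterate_succ_apply, hd]
    exact ih a _

lemma eval_iter_deriv_zero (c : ℝ) (q : Polynomial ℝ) (a k : ℕ) (hk : k < a) :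
    (derivative^[k] ((X - C c) ^ a * q)).eval c = 0 := by
  obtain ⟨b, hb⟩ : ∃ b, a = k + b + 1 := ⟨a - k - 1, by omega⟩
  obtain ⟨r, hr⟩ := iter_deriv_factor c k b q
  rw [hb, hr]
  simp

/-- The Beta-type integral. -/
lemma Ip_beta : ∀ (b a : ℕ), Ip (X ^ a * (X - C 1) ^ b)
    = (-1) ^ b * (a.factorial * b.factorial) / ((a + b + 1).factorial : ℝ) := by
  intro b
  induction b with
  | zero =>
    intro a
    rw [pow_zero, mul_one, Ip_X_pow]
    rw [Nat.factorial_succ]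
    push_cast
    have : ((a:ℝ) + 1) ≠ 0 := by positivity
    have hf : (a.factorial : ℝ) ≠ 0 := by exact_mod_cast Nat.factorial_ne_zero _
    field_simp
    simp
  | succ b ih =>
    intro a
    have key : derivative (X ^ (a + 1) * (X - C 1) ^ (b + 1))
        = C ((a : ℝ) + 1) * (X ^ a * (X - C 1) ^ (b + 1))
          + C ((b : ℝ) + 1) * (X ^ (a + 1) * (X - C 1) ^ b) := by
      rw [derivative_mul, derivative_X_pow, derivative_pow, derivative_sub,
        derivative_X, derivative_C]
      push_cast
      ring_nf
    have hb : Ip (derivative (X ^ (a + 1) * (X - C 1) ^ (b + 1))) = 0 := by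
      rw [Ip_deriv]
      simp
    rw [key, Ip_add, Ip_C_mul, Ip_C_mul, ih (a + 1)] at hb
    have ha1 : ((a : ℝ) + 1) ≠ 0 := by positivity
    have : Ip (X ^ a * (X - C 1) ^ (b + 1))
        = -(((b : ℝ) + 1) * ((-1) ^ b * ((a+1).factorial * b.factorial)
            / ((a + 1 + b + 1).factorial : ℝ))) / ((a : ℝ) + 1) := by
      field_simp at hb ⊢
      linarith
    rw [this]
    have h1 : ((a + 1).factorial : ℝ) = (a + 1) * a.factorial := by
      rw [Nat.factorial_succ]; push_cast; ring
    have h2 : ((b + 1).factorial : ℝ) = (b + 1) * b.factorial := by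
      rw [Nat.factorial_succ]; push_cast; ring
    have h3 : (a + (b + 1) + 1) = (a + 1 + b + 1) := by ring
    rw [h3, h1, h2]
    have hfac : ((a + 1 + b + 1).factorial : ℝ) ≠ 0 := by
      exact_mod_cast Nat.factorial_ne_zero _
    field_simp
    ring

/-- Squared norm of `P m n` with respect to the weight `x^m` on `[0,1]`:
`∫_0^1 x^m P_{m,n}(x)² dx = 1/(m+2n+1)`. -/
theorem stmt_7 (P : ℕ → ℕ → Polynomial ℝ)
    (hP0 : ∀ m, P m 0 = 1)
    (hP : ∀ m n, 1 ≤ n →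
      (X : Polynomial ℝ) ^ m * P m n
        = C (1 / (n.factorial : ℝ)) *
            derivative^[n] (X ^ (m + n) * (X - 1) ^ n))
    (m n : ℕ) :
    ∫ x in (0:ℝ)..1, x ^ m * (P m n).eval x ^ 2
      = 1 / ((m : ℝ) + 2 * n + 1) := by
  rcases Nat.eq_zero_or_pos n with hn | hn
  · subst hn
    simp only [hP0, eval_one, one_pow, mul_one, Nat.cast_zero, mul_zero, add_zero]
    rw [integral_pow]
    simp
  -- main case
  set f : Polynomial ℝ := X ^ (m + n) * (X - 1) ^ n with hf
  have hXP := hP m n hn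
  -- integral as Ip
  have hint : (∫ x in (0:ℝ)..1, x ^ m * (P m n).eval x ^ 2)
      = Ip (X ^ m * (P m n) ^ 2) := by
    simp [Ip]
  rw [hint]
  -- coefficients of P
  have hfC : f = X ^ (m + n) * (X - C 1) ^ n := by rw [hf, C_1]
  have hf_natDeg : f.natDegree = m + 2 * n := by
    rw [hfC]
    rw [natDegree_mul (pow_ne_zero _ X_ne_zero) (pow_ne_zero _ (X_sub_C_ne_zero 1))]
    rw [natDegree_X_pow, natDegree_pow, natDegree_X_sub_C]
    ring
  have hf_monic : f.Monic := by
    rw [hfC]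
    exact (monic_X_pow _).mul ((monic_X_sub_C 1).pow n)
  have hf_lead : f.coeff (m + 2 * n) = 1 := by
    rw [← hf_natDeg]; exact hf_monic.coeff_natDegree
  have hcoeffP : ∀ k, (P m n).coeff k
      = (1 / (n.factorial : ℝ)) * (derivative^[n] f).coeff (m + k) := by
    intro k
    have := congrArg (fun p => Polynomial.coeff p (k + m)) hXP
    simp only [coeff_X_pow_mul, coeff_C_mul] at this
    rw [this, Nat.add_comm k m]
  have hcoeff_hi : ∀ k, n < k → (P m n).coeff k = 0 := by
    intro k hk
    rw [hcoeffP, coeff_iterate_derivative,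
      coeff_eq_zero_of_natDegree_lt (by rw [hf_natDeg]; omega)]
    simp
  have hcoeffn : (P m n).coeff n
      = (1 / (n.factorial : ℝ)) * ((m + 2 * n).descFactorial n : ℝ) := by
    rw [hcoeffP, coeff_iterate_derivative]
    have : m + n + n = m + 2 * n := by ring
    rw [this, hf_lead]
    simp
  -- n-th derivative of P is constant
  have hDP : derivative^[n] (P m n) = C ((n.factorial : ℝ) * (P m n).coeff n) := by
    ext k
    rw [coeff_iterate_derivative]
    rcases Nat.eq_zero_or_pos k with hk | hk
    · subst hk
      simp [Nat.descFactorial_self, mul_comm]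
    · rw [hcoeff_hi (k + n) (by omega), coeff_C, if_neg (by omega)]
      simp
  -- boundary vanishing of derivatives of f
  have h0 : ∀ k < n, (derivative^[k] f).eval 0 = 0 := by
    intro k hk
    have : f = (X - C (0:ℝ)) ^ (m + n) * (X - C 1) ^ n := by
      rw [hfC]; simp
    rw [this]
    exact eval_iter_deriv_zero 0 _ (m + n) k (by omega)
  have h1 : ∀ k < n, (derivative^[k] f).eval 1 = 0 := by
    intro k hk
    have : f = (X - C (1:ℝ)) ^ n * (X ^ (m + n)) := by
      rw [hfC]; ring
    rw [this]
    exact eval_iter_deriv_zero 1 _ n k hk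
  -- main computation
  have hsq : X ^ m * (P m n) ^ 2
      = C (1 / (n.factorial : ℝ)) * ((P m n) * derivative^[n] f) := by
    calc X ^ m * (P m n) ^ 2 = (X ^ m * P m n) * P m n := by ring
    _ = C (1 / (n.factorial : ℝ)) * derivative^[n] f * P m n := by rw [hXP]
    _ = C (1 / (n.factorial : ℝ)) * ((P m n) * derivative^[n] f) := by ring
  rw [hsq, Ip_C_mul, Ip_parts f n h0 h1 (P m n), hDP, Ip_C_mul]
  rw [hcoeffn, hfC, Ip_beta]
  have hfacn : ((n.factorial : ℝ)) ≠ 0 := by exact_mod_cast Nat.factorial_ne_zero _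
  have hdesc : ((m + 2 * n).descFactorial n : ℝ) * ((m + n).factorial : ℝ)
      = ((m + 2 * n).factorial : ℝ) := by
    have := Nat.factorial_mul_descFactorial (n := m + 2 * n) (k := n) (by omega)
    have h4 : m + 2 * n - n = m + n := by omega
    rw [h4] at this
    exact_mod_cast by rw [mul_comm]; exact_mod_cast congrArg (Nat.cast (R := ℝ)) this
  have h5 : m + n + n + 1 = m + 2 * n + 1 := by ring
  rw [h5]
  have h6 : ((m + 2 * n + 1).factorial : ℝ)
      = ((m : ℝ) + 2 * n + 1) * ((m + 2 * n).factorial : ℝ) := by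
    rw [Nat.factorial_succ]; push_cast; ring
  have hfacmn : (((m + n).factorial : ℝ)) ≠ 0 := by exact_mod_cast Nat.factorial_ne_zero _
  have hfacm2n : (((m + 2 * n).factorial : ℝ)) ≠ 0 := by
    exact_mod_cast Nat.factorial_ne_zero _
  have hpos : ((m : ℝ) + 2 * n + 1) ≠ 0 := by positivity
  rw [h6]
  have hsign : ((-1 : ℝ)) ^ n * (-1 : ℝ) ^ n = 1 := by
    rw [← pow_add, Even.neg_one_pow ⟨n, by ring⟩]
  field_simp
  linear_combination ((((m + 2 * n).descFactorial n : ℝ)) * (((m+n).factorial : ℝ))) * hsign + hdesc
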